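/- Let n ≥ 2 and 1 ≤ k ≤ n−1, and consider the block upper triangular system ẋ(t) = B(t)x(t) with B(t) = [[B₁₁(t), B₁₂(t)], [0, B₂₂(t)]], where B₁₁, B₁₂, B₂₂ are continuous and uniformly bounded. Assume ẋ₁ = B₁₁(t)x₁ admits an exponential dichotomy with projection P₁ = 0 and ẋ₂ = B₂₂(t)x₂ admits an exponential dichotomy with projection P₂ = I_k. Then there exists a Lyapunov transformation S(t) such that the transformed system ż(t) = [S(t)⁻¹B(t)S(t) − S(t)⁻¹Ṡ(t)]z(t) is block diagonal of the form ż = diag(D₁(t), D₂(t))z with D₂(t) of size k×k, and moreover the upper-left block is unchanged: D₁(t) = B₁₁(t) for all t. -/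

import Mathlib

noncomputable section

open Matrix Set

/-- Euclidean (spectral / 2-norm) operator norm of a real matrix. -/
noncomputable def mnorm {m n : Type*} [Fintype m] [Fintype n] [DecidableEq n]
    (M : Matrix m n ℝ) : ℝ :=
  ‖LinearMap.toContinuousLinearMap (Matrix.toEuclideanLin M)‖

/-- Euclidean 2-norm of a vector. -/
noncomputable def vnorm {n : Type*} [Fintype n] (v : n → ℝ) : ℝ :=
  Real.sqrt (∑ i, (v i) ^ 2)

/-- A matrix-valued function is uniformly bounded on `J = [0, ∞)`. -/
def UnifBdd {m n : Type*} [Fintype m] [Fintype n] [DecidableEq n]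
    (A : ℝ → Matrix m n ℝ) : Prop :=
  ∃ a : ℝ, ∀ t ∈ Ici (0 : ℝ), mnorm (A t) ≤ a

/-- A matrix-valued function is continuous on `J = [0, ∞)` (entrywise). -/
def ContinuousOnJ {m n : Type*} (A : ℝ → Matrix m n ℝ) : Prop :=
  ∀ i j, ContinuousOn (fun t => A t i j) (Ici (0 : ℝ))

/-- `X` is a fundamental matrix solution of `ẋ = A(t) x` on `J = [0, ∞)`. -/
def IsFundamentalSolution {n : Type*} [Fintype n] [DecidableEq n]
    (A X : ℝ → Matrix n n ℝ) : Prop :=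
  (∀ t ∈ Ici (0 : ℝ), IsUnit (X t)) ∧
  ∀ t ∈ Ici (0 : ℝ), ∀ i j,
    HasDerivWithinAt (fun s => X s i j) ((A t * X t) i j) (Ici (0 : ℝ)) t

/-- `Φ` is the state transition matrix of `ẋ = A(t) x` on `J = [0, ∞)`:
`∂Φ(t,t₀)/∂t = A(t) Φ(t,t₀)`, `Φ(t₀,t₀) = I`. -/
def IsStateTransition {n : Type*} [Fintype n] [DecidableEq n]
    (A : ℝ → Matrix n n ℝ) (Φ : ℝ → ℝ → Matrix n n ℝ) : Prop :=
  (∀ t₀ ∈ Ici (0 : ℝ), Φ t₀ t₀ = 1) ∧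
  ∀ t₀ ∈ Ici (0 : ℝ), ∀ t ∈ Ici (0 : ℝ), ∀ i j,
    HasDerivWithinAt (fun s => Φ s t₀ i j) ((A t * Φ t t₀) i j) (Ici (0 : ℝ)) t

/-- The system `ẋ = F(t) x` is uniformly exponentially stable. -/
def SysUES {n : Type*} [Fintype n] [DecidableEq n] (F : ℝ → Matrix n n ℝ) : Prop :=
  ∃ K : ℝ, 1 ≤ K ∧ ∃ μ : ℝ, 0 < μ ∧
    ∀ Φ : ℝ → ℝ → Matrix n n ℝ, IsStateTransition F Φ →
      ∀ t₀ ∈ Ici (0 : ℝ), ∀ t, t₀ ≤ t →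
        mnorm (Φ t t₀) ≤ K * Real.exp (-μ * (t - t₀))

/-- The pair `(A(t), C(t))` is uniformly exponentially detectable. -/
def UnifDetectable {n p : Type*} [Fintype n] [DecidableEq n] [Fintype p] [DecidableEq p]
    (A : ℝ → Matrix n n ℝ) (C : ℝ → Matrix p n ℝ) : Prop :=
  ∃ L : ℝ → Matrix n p ℝ, ContinuousOnJ L ∧ UnifBdd L ∧
    SysUES (fun t => A t - L t * C t)

/-- Observability Gramian `M(t₁, t₀) = ∫_{t₀}^{t₁} Φ(s,t₀)ᵀ C(s)ᵀ C(s) Φ(s,t₀) ds`. -/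
noncomputable def gramian {n p : Type*} [Fintype n] [Fintype p]
    (C : ℝ → Matrix p n ℝ) (Φ : ℝ → ℝ → Matrix n n ℝ) (t₀ t₁ : ℝ) :
    Matrix n n ℝ :=
  Matrix.of fun i j => ∫ s in t₀..t₁, ((Φ s t₀)ᵀ * (C s)ᵀ * C s * Φ s t₀) i j

/-- The pair `(A(t), C(t))` is uniformly completely observable:
`β₁ I ⪯ M(t₀+σ, t₀) ⪯ β₂ I` for all `t₀ ∈ J`. -/
def UCO {n p : Type*} [Fintype n] [DecidableEq n] [Fintype p]
    (A : ℝ → Matrix n n ℝ) (C : ℝ → Matrix p n ℝ) : Prop :=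
  ∃ σ : ℝ, 0 < σ ∧ ∃ β₁ : ℝ, 0 < β₁ ∧ ∃ β₂ : ℝ, 0 < β₂ ∧
    ∀ Φ : ℝ → ℝ → Matrix n n ℝ, IsStateTransition A Φ →
      ∀ t₀ ∈ Ici (0 : ℝ),
        (gramian C Φ t₀ (t₀ + σ) - β₁ • (1 : Matrix n n ℝ)).PosSemidef ∧
        (β₂ • (1 : Matrix n n ℝ) - gramian C Φ t₀ (t₀ + σ)).PosSemidef

/-- Exponential dichotomy estimates for the fundamental solution `X` with
projection `P` and constants `K ≥ 1`, `α > 0`. -/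
def ExpDichotomyWith {n : Type*} [Fintype n] [DecidableEq n]
    (X : ℝ → Matrix n n ℝ) (P : Matrix n n ℝ) (K α : ℝ) : Prop :=
  P * P = P ∧ 1 ≤ K ∧ 0 < α ∧
  (∀ t₀ ∈ Ici (0 : ℝ), ∀ t, t₀ ≤ t →
    mnorm (X t * P * (X t₀)⁻¹) ≤ K * Real.exp (-α * (t - t₀))) ∧
  (∀ t ∈ Ici (0 : ℝ), ∀ t₀, t ≤ t₀ →
    mnorm (X t * (1 - P) * (X t₀)⁻¹) ≤ K * Real.exp (α * (t - t₀)))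

/-- The system `ẋ = A(t) x` admits an exponential dichotomy on `J` with projection `P`. -/
def HasExpDichotomy {n : Type*} [Fintype n] [DecidableEq n]
    (A : ℝ → Matrix n n ℝ) (P : Matrix n n ℝ) : Prop :=
  ∃ X : ℝ → Matrix n n ℝ, ∃ K α : ℝ,
    IsFundamentalSolution A X ∧ ExpDichotomyWith X P K α

/-- `(S, S')` is a Lyapunov transformation together with its derivative:
`S` is continuously differentiable with derivative `S'`, invertible for each `t`,
and `S`, `S⁻¹`, `S'` are uniformly bounded on `J`. -/
def IsLyapunovPair {n : Type*} [Fintype n] [DecidableEq n]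
    (S S' : ℝ → Matrix n n ℝ) : Prop :=
  (∀ t ∈ Ici (0 : ℝ), IsUnit (S t)) ∧
  (∀ t ∈ Ici (0 : ℝ), ∀ i j,
    HasDerivWithinAt (fun s => S s i j) (S' t i j) (Ici (0 : ℝ)) t) ∧
  ContinuousOnJ S' ∧
  UnifBdd S ∧ UnifBdd (fun t => (S t)⁻¹) ∧ UnifBdd S'



set_option linter.unusedSectionVars false
set_option maxHeartbeats 1000000

open scoped Matrix.Norms.L2Operator

lemma mnorm_eq {m n : Type*} [Fintype m] [Fintype n] [DecidableEq n] (M : Matrix m n ℝ) :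
    mnorm M = ‖M‖ := rfl

variable {l m n p : Type*} [Fintype l] [Fintype m] [Fintype n] [Fintype p]
  [DecidableEq l] [DecidableEq m] [DecidableEq n] [DecidableEq p]

lemma ecoord_le (x : EuclideanSpace ℝ m) (i : m) : |x i| ≤ ‖x‖ := by
  rw [EuclideanSpace.norm_eq]
  rw [← Real.sqrt_sq_eq_abs]
  apply Real.sqrt_le_sqrt
  have : |x i| ^ 2 ≤ ∑ j, ‖x j‖ ^ 2 := by
    refine Finset.single_le_sum (f := fun j => ‖x j‖^2) (fun j _ => by positivity) (Finset.mem_univ i) |>.trans_eq' ?_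
    simp [Real.norm_eq_abs]
  simpa [Real.norm_eq_abs] using this

lemma entry_le_mnorm (M : Matrix m n ℝ) (i : m) (j : n) : |M i j| ≤ mnorm M := by
  have h := Matrix.l2_opNorm_mulVec M (EuclideanSpace.single j (1:ℝ))
  rw [EuclideanSpace.norm_single] at h
  have h2 : |((EuclideanSpace.equiv m ℝ).symm <| M *ᵥ (EuclideanSpace.single j (1:ℝ))) i|
      ≤ ‖(EuclideanSpace.equiv m ℝ).symm <| M *ᵥ (EuclideanSpace.single j (1:ℝ))‖ :=
    ecoord_le _ i
  have h3 : ((EuclideanSpace.equiv m ℝ).symm <| M *ᵥ (EuclideanSpace.single j (1:ℝ))) i = M i j := by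
    show (M *ᵥ (Pi.single j (1:ℝ))) i = M i j
    rw [Matrix.mulVec_single]
    simp
  rw [h3] at h2
  rw [mnorm_eq]
  calc |M i j| ≤ _ := h2
  _ ≤ ‖M‖ * ‖(1:ℝ)‖ := h
  _ = ‖M‖ := by simp

set_option linter.unusedSectionVars false

lemma matrix_sum_repr (M : Matrix m n ℝ) :
    ∑ i : m, ∑ j : n, (M i j) • Matrix.single i j (1:ℝ) = M := by
  conv_rhs => rw [Matrix.matrix_eq_sum_single M]
  refine Finset.sum_congr rfl fun i _ => Finset.sum_congr rfl fun j _ => ?_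
  rw [Matrix.smul_single, smul_eq_mul, mul_one]

/-- entry functional as CLM -/
def entryCLM (i : m) (j : n) : Matrix m n ℝ →L[ℝ] ℝ :=
  LinearMap.mkContinuous
    { toFun := fun M => M i j
      map_add' := fun A B => rfl
      map_smul' := fun c A => rfl } 1
    (fun M => by show ‖M i j‖ ≤ 1 * ‖M‖; simpa [mnorm_eq] using entry_le_mnorm M i j)

lemma hasDeriv_entry {F : ℝ → Matrix m n ℝ} {M : Matrix m n ℝ} {s : Set ℝ} {t : ℝ}
    (h : HasDerivWithinAt F M s t) (i : m) (j : n) :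
    HasDerivWithinAt (fun u => F u i j) (M i j) s t := by
  have := (entryCLM (m := m) (n := n) i j).hasFDerivAt.comp_hasDerivWithinAt t h
  exact this

lemma hasDeriv_matrix {F : ℝ → Matrix m n ℝ} {M : Matrix m n ℝ} {s : Set ℝ} {t : ℝ}
    (h : ∀ i j, HasDerivWithinAt (fun u => F u i j) (M i j) s t) :
    HasDerivWithinAt F M s t := by
  rw [show F = fun u => ∑ i : m, ∑ j : n, (F u i j) • Matrix.single i j (1:ℝ) from
    funext fun u => (matrix_sum_repr (F u)).symm, (matrix_sum_repr M).symm]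
  exact HasDerivWithinAt.fun_sum fun i _ => HasDerivWithinAt.fun_sum fun j _ => (h i j).smul_const _

lemma contWithin_entry {F : ℝ → Matrix m n ℝ} {s : Set ℝ} {t : ℝ}
    (h : ContinuousWithinAt F s t) (i : m) (j : n) :
    ContinuousWithinAt (fun u => F u i j) s t :=
  ((entryCLM (m := m) (n := n) i j).continuous.continuousAt).comp_continuousWithinAt h

lemma contWithin_matrix {F : ℝ → Matrix m n ℝ} {s : Set ℝ} {t : ℝ}
    (h : ∀ i j, ContinuousWithinAt (fun u => F u i j) s t) :
    ContinuousWithinAt F s t := by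
  rw [show F = fun u => ∑ i : m, ∑ j : n, (F u i j) • Matrix.single i j (1:ℝ) from
    funext fun u => (matrix_sum_repr (F u)).symm]
  have : ContinuousWithinAt (fun u => ∑ i : m, ∑ j : n,
      (F u i j) • Matrix.single i j (1:ℝ)) s t := by
    apply tendsto_finset_sum
    intro i _
    apply tendsto_finset_sum
    intro j _
    exact (h i j).smul continuousWithinAt_const
  exact this

/-- uniform entry bound gives mnorm bound with a universal constant -/
lemma mnorm_le_of_entries (M : Matrix m n ℝ) (b : ℝ) (hb0 : 0 ≤ b) (hb : ∀ i j, |M i j| ≤ b) :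
    mnorm M ≤ b * ∑ i : m, ∑ j : n, mnorm (Matrix.single i j (1:ℝ)) := by
  rw [mnorm_eq]
  calc ‖M‖ = ‖∑ i : m, ∑ j : n, (M i j) • Matrix.single i j (1:ℝ)‖ := by
        rw [matrix_sum_repr]
  _ ≤ ∑ i : m, ∑ j : n, ‖(M i j) • Matrix.single i j (1:ℝ)‖ :=
        (norm_sum_le _ _).trans (Finset.sum_le_sum fun i _ => norm_sum_le _ _)
  _ ≤ ∑ i : m, ∑ j : n, b * mnorm (Matrix.single i j (1:ℝ)) := by
        apply Finset.sum_le_sum; intro i _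
        apply Finset.sum_le_sum; intro j _
        rw [norm_smul, mnorm_eq]
        exact mul_le_mul_of_nonneg_right (by simpa using hb i j) (norm_nonneg _)
  _ = b * ∑ i : m, ∑ j : n, mnorm (Matrix.single i j (1:ℝ)) := by
        rw [Finset.mul_sum]; exact Finset.sum_congr rfl fun i _ => (Finset.mul_sum _ _ _).symm

lemma mnorm_nonneg (M : Matrix m n ℝ) : 0 ≤ mnorm M := by rw [mnorm_eq]; exact norm_nonneg _

lemma mnorm_mul_le (A : Matrix m n ℝ) (B : Matrix n p ℝ) :
    mnorm (A * B) ≤ mnorm A * mnorm B := by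
  rw [mnorm_eq, mnorm_eq, mnorm_eq]; exact Matrix.l2_opNorm_mul A B

/-- entrywise product rule for rectangular matrices -/
lemma hasDeriv_matmul {A : ℝ → Matrix m n ℝ} {B : ℝ → Matrix n p ℝ}
    {A' : Matrix m n ℝ} {B' : Matrix n p ℝ} {s : Set ℝ} {t : ℝ}
    (hA : HasDerivWithinAt A A' s t) (hB : HasDerivWithinAt B B' s t) :
    HasDerivWithinAt (fun u => A u * B u) (A' * B t + A t * B') s t := by
  apply hasDeriv_matrix
  intro i j
  have : ∀ u, (A u * B u) i j = ∑ l : n, A u i l * B u l j := fun u => Matrix.mul_apply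
  rw [show (fun u => (A u * B u) i j) = fun u => ∑ l : n, A u i l * B u l j from funext this]
  have : (A' * B t + A t * B') i j = ∑ l : n, (A' i l * B t l j + A t i l * B' l j) := by
    simp [Matrix.add_apply, Matrix.mul_apply, Finset.sum_add_distrib]
  rw [this]
  exact HasDerivWithinAt.fun_sum fun l _ =>
    (hasDeriv_entry hA i l).mul (hasDeriv_entry hB l j)

/-- derivative of the inverse of a matrix-valued function -/
lemma hasDeriv_inv {X : ℝ → Matrix n n ℝ} {X' : Matrix n n ℝ} {s : Set ℝ} {t : ℝ}
    (hX : HasDerivWithinAt X X' s t) (hu : IsUnit (X t)) :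
    HasDerivWithinAt (fun u => (X u)⁻¹) (-((X t)⁻¹ * X' * (X t)⁻¹)) s t := by
  have h1 : HasDerivWithinAt (fun u => Ring.inverse (X u))
      (-((X t)⁻¹ * X' * (X t)⁻¹)) s t := by
    obtain ⟨x, hx⟩ := hu
    have hF := hasFDerivAt_ringInverse (𝕜 := ℝ) (R := Matrix n n ℝ) x
    rw [hx] at hF
    have := hF.comp_hasDerivWithinAt t hX
    refine this.congr_deriv (Eq.symm ?_)
    have hinv : (↑x⁻¹ : Matrix n n ℝ) = (X t)⁻¹ := by
      rw [← hx, Matrix.coe_units_inv x]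
    simp [hinv]
  have : ∀ u, (X u)⁻¹ = Ring.inverse (X u) := fun u => Matrix.nonsing_inv_eq_ringInverse _
  rw [show (fun u => (X u)⁻¹) = fun u => Ring.inverse (X u) from funext this]
  exact h1


section Helpers
variable {m k : Type*} [Fintype m] [Fintype k] [DecidableEq m] [DecidableEq k]

lemma contWithin_mul {p q r : Type*} [Fintype p] [Fintype q] [Fintype r]
    [DecidableEq p] [DecidableEq q] [DecidableEq r]
    {A : ℝ → Matrix p q ℝ} {B : ℝ → Matrix q r ℝ} {s : Set ℝ} {t : ℝ}
    (hA : ContinuousWithinAt A s t) (hB : ContinuousWithinAt B s t) :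
    ContinuousWithinAt (fun u => A u * B u) s t := by
  apply contWithin_matrix
  intro i j
  have : ∀ u, (A u * B u) i j = ∑ l : q, A u i l * B u l j := fun u => Matrix.mul_apply
  rw [show (fun u => (A u * B u) i j) = fun u => ∑ l : q, A u i l * B u l j from funext this]
  exact tendsto_finset_sum _ fun l _ => (contWithin_entry hA i l).mul (contWithin_entry hB l j)

lemma integral_exp_decay (β : ℝ) (hβ : 0 < β) (t : ℝ) :
    ∫ s in Ioi t, Real.exp (-β * s) = Real.exp (-β * t) / β := by
  have h := MeasureTheory.integral_Ioi_of_hasDerivAt_of_tendsto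
    (f := fun s => -Real.exp (-β * s) / β) (f' := fun s => Real.exp (-β * s)) (a := t) (m := 0)
    ?_ ?_ ?_ ?_
  · rw [h]; ring
  · exact (Continuous.continuousAt (by continuity)).continuousWithinAt
  · intro x _
    have hin : HasDerivAt (fun s : ℝ => -β * s) (-β) x := by
      simpa using (hasDerivAt_id x).const_mul (-β)
    have : HasDerivAt (fun s => Real.exp (-β * s)) (Real.exp (-β * x) * (-β)) x :=
      (Real.hasDerivAt_exp _).comp x hin
    have h2 := (this.neg.div_const β)
    refine h2.congr_deriv (Eq.symm ?_)
    field_simp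
  · exact exp_neg_integrableOn_Ioi t hβ
  · have h1 : Filter.Tendsto (fun s : ℝ => -β * s) Filter.atTop Filter.atBot := by
      apply Filter.Tendsto.const_mul_atTop_of_neg (neg_neg_iff_pos.mpr hβ) Filter.tendsto_id
    have h2 : Filter.Tendsto (fun s : ℝ => Real.exp (-β * s)) Filter.atTop (nhds 0) :=
      Real.tendsto_exp_atBot.comp h1
    simpa using (h2.neg.div_const β)

/-- left-right multiplication as a CLM -/
def lrCLM {p q r w : Type*} [Fintype p] [Fintype q] [Fintype r] [Fintype w]
    [DecidableEq p] [DecidableEq q] [DecidableEq r] [DecidableEq w]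
    (A : Matrix p q ℝ) (C : Matrix r w ℝ) : Matrix q r ℝ →L[ℝ] Matrix p w ℝ :=
  LinearMap.mkContinuous
    { toFun := fun M => A * M * C
      map_add' := fun M N => by show A * (M + N) * C = A * M * C + A * N * C; rw [Matrix.mul_add, Matrix.add_mul]
      map_smul' := fun c M => by
        simp [Matrix.mul_smul, Matrix.smul_mul] }
    (mnorm A * mnorm C)
    (fun M => by
      have h1 : ‖A * M * C‖ ≤ mnorm (A * M) * mnorm C := mnorm_mul_le _ _
      have h2 : mnorm (A * M) ≤ mnorm A * ‖M‖ := mnorm_mul_le _ _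
      calc ‖A * M * C‖ ≤ mnorm (A * M) * mnorm C := h1
      _ ≤ (mnorm A * ‖M‖) * mnorm C :=
          mul_le_mul_of_nonneg_right h2 (mnorm_nonneg _)
      _ = mnorm A * mnorm C * ‖M‖ := by ring)

lemma lrCLM_apply {p q r w : Type*} [Fintype p] [Fintype q] [Fintype r] [Fintype w]
    [DecidableEq p] [DecidableEq q] [DecidableEq r] [DecidableEq w]
    (A : Matrix p q ℝ) (C : Matrix r w ℝ) (M : Matrix q r ℝ) :
    lrCLM A C M = A * M * C := rfl

/-- Existence of a bounded solution of `H' = B11 H + B12 - H B22` given the dichotomies. -/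
lemma exists_H
    (B11 : ℝ → Matrix m m ℝ) (B12 : ℝ → Matrix m k ℝ) (B22 : ℝ → Matrix k k ℝ)
    (hB12c : ContinuousOnJ B12) (hB12b : UnifBdd B12)
    (hED1 : HasExpDichotomy B11 (0 : Matrix m m ℝ))
    (hED2 : HasExpDichotomy B22 (1 : Matrix k k ℝ)) :
    ∃ H : ℝ → Matrix m k ℝ, ∃ c : ℝ, (∀ t ∈ Ici (0:ℝ), mnorm (H t) ≤ c) ∧
      (∀ t ∈ Ici (0:ℝ),
        HasDerivWithinAt H (B11 t * H t + B12 t - H t * B22 t) (Ici (0:ℝ)) t) := by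
  classical
  obtain ⟨X1, K1, α1, ⟨hX1u, hX1d⟩, ⟨-, hK1, hα1, -, hdich1⟩⟩ := hED1
  obtain ⟨X2, K2, α2, ⟨hX2u, hX2d⟩, ⟨-, hK2, hα2, hdich2, -⟩⟩ := hED2
  have hXX1 : ∀ t ∈ Ici (0:ℝ), ∀ s, t ≤ s →
      mnorm (X1 t * (X1 s)⁻¹) ≤ K1 * Real.exp (α1 * (t - s)) := by
    intro t ht s hts
    simpa using hdich1 t ht s hts
  have hXX2 : ∀ t₀ ∈ Ici (0:ℝ), ∀ s, t₀ ≤ s →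
      mnorm (X2 s * (X2 t₀)⁻¹) ≤ K2 * Real.exp (-α2 * (s - t₀)) := by
    intro t₀ ht₀ s hs
    simpa using hdich2 t₀ ht₀ s hs
  have hX1det : ∀ t ∈ Ici (0:ℝ), IsUnit (X1 t).det :=
    fun t ht => (Matrix.isUnit_iff_isUnit_det _).mp (hX1u t ht)
  have hX2det : ∀ t ∈ Ici (0:ℝ), IsUnit (X2 t).det :=
    fun t ht => (Matrix.isUnit_iff_isUnit_det _).mp (hX2u t ht)
  have hX1D : ∀ t ∈ Ici (0:ℝ), HasDerivWithinAt X1 (B11 t * X1 t) (Ici (0:ℝ)) t :=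
    fun t ht => hasDeriv_matrix (fun i j => hX1d t ht i j)
  have hX2D : ∀ t ∈ Ici (0:ℝ), HasDerivWithinAt X2 (B22 t * X2 t) (Ici (0:ℝ)) t :=
    fun t ht => hasDeriv_matrix (fun i j => hX2d t ht i j)
  have hX1c : ContinuousOn X1 (Ici (0:ℝ)) := fun t ht => (hX1D t ht).continuousWithinAt
  have hX2c : ContinuousOn X2 (Ici (0:ℝ)) := fun t ht => (hX2D t ht).continuousWithinAt
  have hX1invc : ContinuousOn (fun s => (X1 s)⁻¹) (Ici (0:ℝ)) := by
    intro s hs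
    have h1 : ContinuousAt Ring.inverse (X1 s) :=
      (differentiableAt_inverse (𝕜 := ℝ) (hX1u s hs)).continuousAt
    have := h1.comp_continuousWithinAt (hX1c s hs)
    simpa [Function.comp_def, Matrix.nonsing_inv_eq_ringInverse] using this
  obtain ⟨a0, ha0⟩ := hB12b
  set a : ℝ := max a0 0 with ha
  have ha_nonneg : 0 ≤ a := le_max_right _ _
  have hB12le : ∀ t ∈ Ici (0:ℝ), mnorm (B12 t) ≤ a :=
    fun t ht => le_trans (ha0 t ht) (le_max_left _ _)
  have hB12M : ContinuousOn B12 (Ici (0:ℝ)) :=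
    fun t ht => contWithin_matrix (fun i j => hB12c i j t ht)
  set f : ℝ → Matrix m k ℝ := fun s => (X1 s)⁻¹ * B12 s * X2 s with hf
  have hfc : ContinuousOn f (Ici (0:ℝ)) :=
    fun s hs => contWithin_mul (contWithin_mul (hX1invc s hs) (hB12M s hs)) (hX2c s hs)
  set c1 : ℝ := mnorm ((X1 0)⁻¹) * K1 with hc1
  set c2 : ℝ := K2 * mnorm (X2 0) with hc2
  have hc1n : 0 ≤ c1 := mul_nonneg (mnorm_nonneg _) (le_trans zero_le_one hK1)
  have hc2n : 0 ≤ c2 := mul_nonneg (le_trans zero_le_one hK2) (mnorm_nonneg _)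
  have hX1invb : ∀ s ∈ Ici (0:ℝ), mnorm ((X1 s)⁻¹) ≤ c1 * Real.exp (-α1 * s) := by
    intro s hs
    have heq : (X1 s)⁻¹ = (X1 0)⁻¹ * (X1 0 * (X1 s)⁻¹) := by
      rw [← Matrix.mul_assoc, Matrix.nonsing_inv_mul _ (hX1det 0 self_mem_Ici), Matrix.one_mul]
    rw [heq]
    calc mnorm ((X1 0)⁻¹ * (X1 0 * (X1 s)⁻¹))
        ≤ mnorm ((X1 0)⁻¹) * mnorm (X1 0 * (X1 s)⁻¹) := mnorm_mul_le _ _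
    _ ≤ mnorm ((X1 0)⁻¹) * (K1 * Real.exp (α1 * (0 - s))) :=
        mul_le_mul_of_nonneg_left (hXX1 0 self_mem_Ici s hs) (mnorm_nonneg _)
    _ = c1 * Real.exp (-α1 * s) := by rw [hc1]; ring_nf
  have hX2b : ∀ s ∈ Ici (0:ℝ), mnorm (X2 s) ≤ c2 * Real.exp (-α2 * s) := by
    intro s hs
    have heq : X2 s = (X2 s * (X2 0)⁻¹) * X2 0 := by
      rw [Matrix.mul_assoc, Matrix.nonsing_inv_mul _ (hX2det 0 self_mem_Ici), Matrix.mul_one]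
    rw [heq]
    calc mnorm ((X2 s * (X2 0)⁻¹) * X2 0)
        ≤ mnorm (X2 s * (X2 0)⁻¹) * mnorm (X2 0) := mnorm_mul_le _ _
    _ ≤ (K2 * Real.exp (-α2 * (s - 0))) * mnorm (X2 0) :=
        mul_le_mul_of_nonneg_right (hXX2 0 self_mem_Ici s hs) (mnorm_nonneg _)
    _ = c2 * Real.exp (-α2 * s) := by rw [hc2]; ring_nf
  set β : ℝ := α1 + α2 with hβdef
  have hβ : 0 < β := add_pos hα1 hα2
  set C : ℝ := c1 * a * c2 with hC
  have hCn : 0 ≤ C := mul_nonneg (mul_nonneg hc1n ha_nonneg) hc2n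
  have hfb : ∀ s ∈ Ici (0:ℝ), mnorm (f s) ≤ C * Real.exp (-β * s) := by
    intro s hs
    calc mnorm (f s) ≤ mnorm ((X1 s)⁻¹ * B12 s) * mnorm (X2 s) := mnorm_mul_le _ _
    _ ≤ (mnorm ((X1 s)⁻¹) * mnorm (B12 s)) * mnorm (X2 s) :=
        mul_le_mul_of_nonneg_right (mnorm_mul_le _ _) (mnorm_nonneg _)
    _ ≤ ((c1 * Real.exp (-α1 * s)) * a) * (c2 * Real.exp (-α2 * s)) := by
        apply mul_le_mul
        · exact mul_le_mul (hX1invb s hs) (hB12le s hs) (mnorm_nonneg _)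
            (mul_nonneg hc1n (Real.exp_pos _).le)
        · exact hX2b s hs
        · exact mnorm_nonneg _
        · exact mul_nonneg (mul_nonneg hc1n (Real.exp_pos _).le) ha_nonneg
    _ = C * Real.exp (-β * s) := by
        rw [hC, hβdef, show (-(α1+α2) * s) = (-α1*s) + (-α2*s) by ring, Real.exp_add]; ring
  have hfi0 : MeasureTheory.IntegrableOn f (Ioi (0:ℝ)) MeasureTheory.volume := by
    apply MeasureTheory.Integrable.mono'
      (g := fun s => C * Real.exp (-β * s))
      ((exp_neg_integrableOn_Ioi 0 hβ).const_mul C)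
      (((hfc.mono Ioi_subset_Ici_self)).aestronglyMeasurable measurableSet_Ioi)
    rw [MeasureTheory.ae_restrict_iff' measurableSet_Ioi]
    exact Filter.Eventually.of_forall (fun s hs => hfb s (mem_Ici.mpr (le_of_lt (mem_Ioi.mp hs))))
  have hfim : ∀ t ∈ Ici (0:ℝ), MeasureTheory.IntegrableOn f (Ioi t) MeasureTheory.volume :=
    fun t ht => hfi0.mono_set (Ioi_subset_Ioi ht)
  have hfint : ∀ t ∈ Ici (0:ℝ), IntervalIntegrable f MeasureTheory.volume 0 t :=
    fun t ht => (intervalIntegrable_iff_integrableOn_Ioc_of_le ht).mpr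
      (hfi0.mono_set Ioc_subset_Ioi_self)
  set V : ℝ → Matrix m k ℝ :=
    fun t => (∫ s in Ioi (0:ℝ), f s) - ∫ s in (0:ℝ)..t, f s with hV
  have hVd : ∀ t ∈ Ici (0:ℝ), HasDerivWithinAt V (-(f t)) (Ici (0:ℝ)) t := by
    intro t ht
    rcases eq_or_lt_of_le (mem_Ici.mp ht) with h0 | h0
    · subst h0
      have hF : HasDerivWithinAt (fun u => ∫ s in (0:ℝ)..u, f s) (f 0) (Ici (0:ℝ)) 0 :=
        intervalIntegral.integral_hasDerivWithinAt_right (hfint 0 self_mem_Ici)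
          ⟨Ioi 0, self_mem_nhdsWithin,
            (hfc.mono Ioi_subset_Ici_self).aestronglyMeasurable measurableSet_Ioi⟩
          ((hfc 0 self_mem_Ici).mono Ioi_subset_Ici_self)
      exact hF.const_sub _
    · have hmeas : StronglyMeasurableAtFilter f (nhds t) MeasureTheory.volume :=
        ⟨Ioi 0, Ioi_mem_nhds h0,
          ((hfc.mono Ioi_subset_Ici_self)).aestronglyMeasurable measurableSet_Ioi⟩
      have hcontAt : ContinuousAt f t := (hfc t (le_of_lt h0)).continuousAt (Ici_mem_nhds h0)
      have hF : HasDerivAt (fun u => ∫ s in (0:ℝ)..u, f s) (f t) t :=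
        intervalIntegral.integral_hasDerivAt_right (hfint t ht) hmeas hcontAt
      exact (hF.const_sub _).hasDerivWithinAt
  have hVt : ∀ t ∈ Ici (0:ℝ), V t = ∫ s in Ioi t, f s := by
    intro t ht
    have hsplit : ∫ s in Ioi (0:ℝ), f s = (∫ s in Ioc 0 t, f s) + ∫ s in Ioi t, f s := by
      rw [← MeasureTheory.setIntegral_union (Ioc_disjoint_Ioi self_mem_Ici) measurableSet_Ioi
        (hfi0.mono_set Ioc_subset_Ioi_self) (hfim t ht), Ioc_union_Ioi_eq_Ioi ht]
    rw [hV]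
    simp only [hsplit, intervalIntegral.integral_of_le ht]
    abel
  set D : ℝ := K1 * a * K2 with hD
  have hDn : 0 ≤ D :=
    mul_nonneg (mul_nonneg (le_trans zero_le_one hK1) ha_nonneg) (le_trans zero_le_one hK2)
  have hgb : ∀ t ∈ Ici (0:ℝ), ∀ s ∈ Ioi t,
      mnorm (X1 t * f s * (X2 t)⁻¹) ≤ D * Real.exp (β * t) * Real.exp (-β * s) := by
    intro t ht s hs
    have hs' : t ≤ s := le_of_lt hs
    have hs0 : s ∈ Ici (0:ℝ) := le_trans ht hs'
    have heq : X1 t * f s * (X2 t)⁻¹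
        = (X1 t * (X1 s)⁻¹) * B12 s * (X2 s * (X2 t)⁻¹) := by
      rw [hf]; simp only [Matrix.mul_assoc]
    rw [heq]
    calc mnorm ((X1 t * (X1 s)⁻¹) * B12 s * (X2 s * (X2 t)⁻¹))
        ≤ mnorm ((X1 t * (X1 s)⁻¹) * B12 s) * mnorm (X2 s * (X2 t)⁻¹) := mnorm_mul_le _ _
    _ ≤ (mnorm (X1 t * (X1 s)⁻¹) * mnorm (B12 s)) * mnorm (X2 s * (X2 t)⁻¹) :=
        mul_le_mul_of_nonneg_right (mnorm_mul_le _ _) (mnorm_nonneg _)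
    _ ≤ ((K1 * Real.exp (α1 * (t - s))) * a) * (K2 * Real.exp (-α2 * (s - t))) := by
        apply mul_le_mul
        · exact mul_le_mul (hXX1 t ht s hs') (hB12le s hs0) (mnorm_nonneg _)
            (mul_nonneg (le_trans zero_le_one hK1) (Real.exp_pos _).le)
        · exact hXX2 t ht s hs'
        · exact mnorm_nonneg _
        · exact mul_nonneg (mul_nonneg (le_trans zero_le_one hK1) (Real.exp_pos _).le) ha_nonneg
    _ = D * Real.exp (β * t) * Real.exp (-β * s) := by
        rw [hD, hβdef, show ((α1+α2) * t) = (α1*t) + (α2*t) by ring,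
          show (-(α1+α2) * s) = (-α1*s) + (-α2*s) by ring,
          show (α1 * (t - s)) = (α1*t) + (-α1*s) by ring,
          show (-α2 * (s - t)) = (α2*t) + (-α2*s) by ring,
          Real.exp_add, Real.exp_add, Real.exp_add, Real.exp_add]
        ring
  refine ⟨fun t => -(X1 t * V t * (X2 t)⁻¹), D / β, ?_, ?_⟩
  · -- boundedness
    intro t ht
    have hrep : X1 t * V t * (X2 t)⁻¹ = ∫ s in Ioi t, X1 t * f s * (X2 t)⁻¹ := by
      rw [hVt t ht]
      have := ContinuousLinearMap.integral_comp_comm (lrCLM (X1 t) ((X2 t)⁻¹)) (hfim t ht)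
      simpa [lrCLM_apply] using this.symm
    have hbnd : mnorm (∫ s in Ioi t, X1 t * f s * (X2 t)⁻¹)
        ≤ ∫ s in Ioi t, D * Real.exp (β * t) * Real.exp (-β * s) := by
      rw [mnorm_eq]
      apply MeasureTheory.norm_integral_le_of_norm_le
      · exact ((exp_neg_integrableOn_Ioi t hβ).const_mul _)
      · rw [MeasureTheory.ae_restrict_iff' measurableSet_Ioi]
        exact Filter.Eventually.of_forall (fun s hs => hgb t ht s hs)
    have hval : ∫ s in Ioi t, D * Real.exp (β * t) * Real.exp (-β * s) = D / β := by
      rw [MeasureTheory.integral_const_mul, integral_exp_decay β hβ t]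
      rw [div_eq_mul_inv, div_eq_mul_inv, mul_assoc, mul_assoc, ← mul_assoc (Real.exp (β * t)),
        ← Real.exp_add]
      simp
      rw [hD]; ring
    have : mnorm (-(X1 t * V t * (X2 t)⁻¹)) = mnorm (X1 t * V t * (X2 t)⁻¹) := by
      rw [mnorm_eq, mnorm_eq, norm_neg]
    rw [this, hrep]
    exact hbnd.trans (le_of_eq hval)
  · -- the ODE
    intro t ht
    have hX1inv : X1 t * (X1 t)⁻¹ = 1 := Matrix.mul_nonsing_inv _ (hX1det t ht)
    have hX2inv : X2 t * (X2 t)⁻¹ = 1 := Matrix.mul_nonsing_inv _ (hX2det t ht)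
    have hY := hasDeriv_inv (hX2D t ht) (hX2u t ht)
    have h1 := hasDeriv_matmul (hasDeriv_matmul (hX1D t ht) (hVd t ht)) hY
    have h2 := h1.neg
    refine h2.congr_deriv (Eq.symm ?_)
    have e1 : ∀ Z : Matrix m k ℝ, X1 t * ((X1 t)⁻¹ * Z) = Z := fun Z => by
      rw [← Matrix.mul_assoc, hX1inv, Matrix.one_mul]
    have e2 : ∀ Z : Matrix k k ℝ, X2 t * ((X2 t)⁻¹ * Z) = Z := fun Z => by
      rw [← Matrix.mul_assoc, hX2inv, Matrix.one_mul]
    simp only [hf]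
    simp only [Matrix.mul_neg, Matrix.neg_mul, Matrix.add_mul, Matrix.mul_add,
      neg_neg, neg_add_rev, sub_eq_add_neg, Matrix.mul_assoc]
    simp only [e1, e2, hX1inv, hX2inv, Matrix.mul_one]
    abel

end Helpers

/-- Reducibility of a block triangular system with exponential dichotomy to block
diagonal form with unchanged upper-left block (Proposition 3, second part). -/
theorem block_triangular_reducible_D1_eq_B11
    (n k : ℕ) (hn : 2 ≤ n) (hk1 : 1 ≤ k) (hk2 : k ≤ n - 1)
    (B11 : ℝ → Matrix (Fin (n - k)) (Fin (n - k)) ℝ)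
    (B12 : ℝ → Matrix (Fin (n - k)) (Fin k) ℝ)
    (B22 : ℝ → Matrix (Fin k) (Fin k) ℝ)
    (hB11 : ContinuousOnJ B11 ∧ UnifBdd B11)
    (hB12 : ContinuousOnJ B12 ∧ UnifBdd B12)
    (hB22 : ContinuousOnJ B22 ∧ UnifBdd B22)
    (hED1 : HasExpDichotomy B11 (0 : Matrix (Fin (n - k)) (Fin (n - k)) ℝ))
    (hED2 : HasExpDichotomy B22 (1 : Matrix (Fin k) (Fin k) ℝ))
    (B : ℝ → Matrix (Fin (n - k) ⊕ Fin k) (Fin (n - k) ⊕ Fin k) ℝ)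
    (hB : ∀ t, B t = Matrix.fromBlocks (B11 t) (B12 t) 0 (B22 t)) :
    ∃ S S' : ℝ → Matrix (Fin (n - k) ⊕ Fin k) (Fin (n - k) ⊕ Fin k) ℝ,
      IsLyapunovPair S S' ∧
      ∃ D2 : ℝ → Matrix (Fin k) (Fin k) ℝ,
        ∀ t ∈ Ici (0 : ℝ),
          (S t)⁻¹ * B t * S t - (S t)⁻¹ * S' t =
            Matrix.fromBlocks (B11 t) 0 0 (D2 t) := by
  classical
  obtain ⟨H, cH, hHb, hHd⟩ := exists_H B11 B12 B22 hB12.1 hB12.2 hED1 hED2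
  have hcH0 : 0 ≤ cH := (mnorm_nonneg _).trans (hHb 0 self_mem_Ici)
  set Hd : ℝ → Matrix (Fin (n-k)) (Fin k) ℝ :=
    fun t => B11 t * H t + B12 t - H t * B22 t with hHdDef
  set S : ℝ → Matrix (Fin (n - k) ⊕ Fin k) (Fin (n - k) ⊕ Fin k) ℝ :=
    fun t => Matrix.fromBlocks 1 (H t) 0 1 with hSdef
  set S' : ℝ → Matrix (Fin (n - k) ⊕ Fin k) (Fin (n - k) ⊕ Fin k) ℝ :=
    fun t => Matrix.fromBlocks 0 (Hd t) 0 0 with hS'def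
  have hST : ∀ t, S t * Matrix.fromBlocks 1 (-(H t)) 0 1 = 1 := by
    intro t
    rw [hSdef]
    simp only [Matrix.fromBlocks_multiply, Matrix.one_mul, Matrix.mul_one, Matrix.mul_zero,
      Matrix.zero_mul, add_zero, zero_add, Matrix.mul_neg, Matrix.mul_one]
    rw [← Matrix.fromBlocks_one]
    congr 1 <;> simp
  have hTS : ∀ t, Matrix.fromBlocks 1 (-(H t)) 0 1 * S t = 1 := by
    intro t
    rw [hSdef]
    simp only [Matrix.fromBlocks_multiply, Matrix.one_mul, Matrix.mul_one, Matrix.mul_zero,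
      Matrix.zero_mul, add_zero, zero_add, Matrix.neg_mul, Matrix.one_mul]
    rw [← Matrix.fromBlocks_one]
    congr 1 <;> simp
  have hSu : ∀ t, IsUnit (S t) := fun t => ⟨⟨S t, _, hST t, hTS t⟩, rfl⟩
  have hSinv : ∀ t, (S t)⁻¹ = Matrix.fromBlocks 1 (-(H t)) 0 1 :=
    fun t => Matrix.inv_eq_right_inv (hST t)
  have hHc : ContinuousOn H (Ici (0:ℝ)) := fun t ht => (hHd t ht).continuousWithinAt
  have hHdc : ContinuousOn Hd (Ici (0:ℝ)) := by
    intro t ht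
    exact ((contWithin_mul (contWithin_matrix fun i j => hB11.1 i j t ht) (hHc t ht)).add
      (contWithin_matrix fun i j => hB12.1 i j t ht)).sub
      (contWithin_mul (hHc t ht) (contWithin_matrix fun i j => hB22.1 i j t ht))
  obtain ⟨a11, ha11⟩ := hB11.2
  obtain ⟨a12, ha12⟩ := hB12.2
  obtain ⟨a22, ha22⟩ := hB22.2
  have ha11n : 0 ≤ a11 := (mnorm_nonneg _).trans (ha11 0 self_mem_Ici)
  have ha22n : 0 ≤ a22 := (mnorm_nonneg _).trans (ha22 0 self_mem_Ici)
  have hHdb : ∀ t ∈ Ici (0:ℝ), mnorm (Hd t) ≤ a11 * cH + a12 + cH * a22 := by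
    intro t ht
    have h1 : mnorm (Hd t) ≤ mnorm (B11 t * H t) + mnorm (B12 t) + mnorm (H t * B22 t) := by
      rw [hHdDef]
      simp only [mnorm_eq]
      exact (norm_sub_le _ _).trans (add_le_add_left (norm_add_le _ _) _)
    refine h1.trans (add_le_add (add_le_add ?_ (ha12 t ht)) ?_)
    · exact (mnorm_mul_le _ _).trans
        (mul_le_mul (ha11 t ht) (hHb t ht) (mnorm_nonneg _) ha11n)
    · exact (mnorm_mul_le _ _).trans
        (mul_le_mul (hHb t ht) (ha22 t ht) (mnorm_nonneg _) hcH0)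
  refine ⟨S, S', ⟨fun t _ => hSu t, ?_, ?_, ?_, ?_, ?_⟩, B22, ?_⟩
  · -- derivative entries
    intro t ht i j
    have hHe := hasDeriv_entry (hHd t ht)
    rcases i with i | i <;> rcases j with j | j
    · simpa [hSdef, hS'def] using
        hasDerivWithinAt_const t (Ici (0:ℝ)) ((1 : Matrix (Fin (n-k)) (Fin (n-k)) ℝ) i j)
    · simpa [hSdef, hS'def, hHdDef] using hHe i j
    · simpa [hSdef, hS'def] using
        hasDerivWithinAt_const t (Ici (0:ℝ)) ((0 : Matrix (Fin k) (Fin (n-k)) ℝ) i j)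
    · simpa [hSdef, hS'def] using
        hasDerivWithinAt_const t (Ici (0:ℝ)) ((1 : Matrix (Fin k) (Fin k) ℝ) i j)
  · -- ContinuousOnJ S'
    intro i j
    rcases i with i | i <;> rcases j with j | j
    · simpa [hS'def] using continuousOn_const (c := (0:ℝ))
    · have := fun (t : ℝ) (ht : t ∈ Ici (0:ℝ)) => contWithin_entry (hHdc t ht) i j
      have hc : ContinuousOn (fun u => Hd u i j) (Ici 0) := this
      simpa [hS'def] using hc
    · simpa [hS'def] using continuousOn_const (c := (0:ℝ))
    · simpa [hS'def] using continuousOn_const (c := (0:ℝ))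
  · -- UnifBdd S
    refine ⟨(max 1 cH) * ∑ i : Fin (n-k) ⊕ Fin k, ∑ j : Fin (n-k) ⊕ Fin k, mnorm (Matrix.single i j (1:ℝ)), fun t ht => ?_⟩
    apply mnorm_le_of_entries _ _ (le_trans zero_le_one (le_max_left _ _))
    intro i j
    rcases i with i | i <;> rcases j with j | j
    · simp only [hSdef, Matrix.fromBlocks_apply₁₁]
      have h1 : |(1 : Matrix _ _ ℝ) i j| ≤ 1 := by
        rcases eq_or_ne i j with h | h <;> simp [Matrix.one_apply, h]
      exact h1.trans (le_max_left _ _)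
    · simp only [hSdef, Matrix.fromBlocks_apply₁₂]
      exact le_trans ((entry_le_mnorm _ i j).trans (hHb t ht)) (le_max_right _ _)
    · simp only [hSdef, Matrix.fromBlocks_apply₂₁, Matrix.zero_apply, abs_zero]
      exact le_trans zero_le_one (le_max_left _ _)
    · simp only [hSdef, Matrix.fromBlocks_apply₂₂]
      have h1 : |(1 : Matrix _ _ ℝ) i j| ≤ 1 := by
        rcases eq_or_ne i j with h | h <;> simp [Matrix.one_apply, h]
      exact h1.trans (le_max_left _ _)
  · -- UnifBdd S⁻¹
    refine ⟨(max 1 cH) * ∑ i : Fin (n-k) ⊕ Fin k, ∑ j : Fin (n-k) ⊕ Fin k, mnorm (Matrix.single i j (1:ℝ)), fun t ht => ?_⟩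
    simp only []
    rw [hSinv t]
    apply mnorm_le_of_entries _ _ (le_trans zero_le_one (le_max_left _ _))
    intro i j
    rcases i with i | i <;> rcases j with j | j
    · simp only [Matrix.fromBlocks_apply₁₁]
      have h1 : |(1 : Matrix _ _ ℝ) i j| ≤ 1 := by
        rcases eq_or_ne i j with h | h <;> simp [Matrix.one_apply, h]
      exact h1.trans (le_max_left _ _)
    · simp only [Matrix.fromBlocks_apply₁₂, Matrix.neg_apply, abs_neg]
      exact le_trans ((entry_le_mnorm _ i j).trans (hHb t ht)) (le_max_right _ _)
    · simp only [Matrix.fromBlocks_apply₂₁, Matrix.zero_apply, abs_zero]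
      exact le_trans zero_le_one (le_max_left _ _)
    · simp only [Matrix.fromBlocks_apply₂₂]
      have h1 : |(1 : Matrix _ _ ℝ) i j| ≤ 1 := by
        rcases eq_or_ne i j with h | h <;> simp [Matrix.one_apply, h]
      exact h1.trans (le_max_left _ _)
  · -- UnifBdd S'
    refine ⟨(max 0 (a11 * cH + a12 + cH * a22)) * ∑ i : Fin (n-k) ⊕ Fin k,
      ∑ j : Fin (n-k) ⊕ Fin k, mnorm (Matrix.single i j (1:ℝ)), fun t ht => ?_⟩
    apply mnorm_le_of_entries _ _ (le_max_left _ _)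
    intro i j
    rcases i with i | i <;> rcases j with j | j
    · simp [hS'def]
    · simp only [hS'def, Matrix.fromBlocks_apply₁₂]
      exact le_trans ((entry_le_mnorm _ i j).trans (hHdb t ht)) (le_max_right _ _)
    · simp [hS'def]
    · simp [hS'def]
  · -- final identity
    intro t ht
    rw [hSinv t, hB t, hSdef, hS'def]
    simp only [Matrix.fromBlocks_multiply, Matrix.one_mul, Matrix.mul_one, Matrix.mul_zero,
      Matrix.zero_mul, add_zero, zero_add, Matrix.neg_mul, Matrix.mul_neg, neg_zero]
    ext p q
    rcases p with p | p <;> rcases q with q | q <;>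
      simp [Matrix.fromBlocks, Matrix.sub_apply, Matrix.add_apply, Matrix.neg_apply, hHdDef,
        Matrix.mul_apply, Matrix.sub_apply] <;> ring_nf

end
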